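/- arXiv:2602.19095 — 2 statements merged into one kernel-verified Lean document; each statement's English description precedes it below -/
import Mathlib

section
/- Let F, G, H be simple graphs, let (B¹_g)_{g∈V(G)} be a G-decomposition of F (i.e. it satisfies (D1), (D2), (D3) for F over G), and let (B²_h)_{h∈V(H)} be an H-decomposition of G (i.e. it satisfies (D1), (D2), (D3) for G over H). For each h ∈ V(H) define B̃_h := ⋃_{g ∈ B²_h} B¹_g. Then the family (B̃_h)_{h∈V(H)} is an H-decomposition of F, i.e. it satisfies (D1), (D2), (D3) for F over H. -/
/-- Hom between induced subgraphs from a subset inclusion. -/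
def induceHomOfLE {γ : Type*} (H : SimpleGraph γ) {T S : Set γ} (hTS : T ⊆ S) :
    H.induce T →g H.induce S where
  toFun v := ⟨v.1, hTS v.2⟩
  map_rel' := fun a => a

/-- Composing a `G`-decomposition of `F` with an `H`-decomposition of `G`
(with bags `B̃_h := ⋃_{g ∈ B²_h} B¹_g`) yields an `H`-decomposition of `F`. -/
theorem composition_of_decompositions
    {α β γ : Type*} (F : SimpleGraph α) (G : SimpleGraph β) (H : SimpleGraph γ)
    (B1 : β → Set α) (B2 : γ → Set β)
    -- (D1), (D2), (D3) for F over G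
    (hD1₁ : ∀ f : α, ∃ g : β, f ∈ B1 g)
    (hD2₁ : ∀ f f' : α, F.Adj f f' →
      (∃ g : β, f ∈ B1 g ∧ f' ∈ B1 g) ∨
      (∃ g g' : β, G.Adj g g' ∧ f ∈ B1 g ∧ f' ∈ B1 g'))
    (hD3₁ : ∀ f : α, (G.induce {g : β | f ∈ B1 g}).Connected)
    -- (D1), (D2), (D3) for G over H
    (hD1₂ : ∀ g : β, ∃ h : γ, g ∈ B2 h)
    (hD2₂ : ∀ g g' : β, G.Adj g g' →
      (∃ h : γ, g ∈ B2 h ∧ g' ∈ B2 h) ∨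
      (∃ h h' : γ, H.Adj h h' ∧ g ∈ B2 h ∧ g' ∈ B2 h'))
    (hD3₂ : ∀ g : β, (H.induce {h : γ | g ∈ B2 h}).Connected) :
    -- (D1), (D2), (D3) for F over H with bags ⋃_{g ∈ B2 h} B1 g
    (∀ f : α, ∃ h : γ, f ∈ ⋃ g ∈ B2 h, B1 g) ∧
    (∀ f f' : α, F.Adj f f' →
      (∃ h : γ, f ∈ (⋃ g ∈ B2 h, B1 g) ∧ f' ∈ (⋃ g ∈ B2 h, B1 g)) ∨
      (∃ h h' : γ, H.Adj h h' ∧ f ∈ (⋃ g ∈ B2 h, B1 g) ∧ f' ∈ (⋃ g ∈ B2 h', B1 g))) ∧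
    (∀ f : α, (H.induce {h : γ | f ∈ ⋃ g ∈ B2 h, B1 g}).Connected) := by
  have memU : ∀ (f : α) (h : γ), f ∈ (⋃ g ∈ B2 h, B1 g) ↔ ∃ g, g ∈ B2 h ∧ f ∈ B1 g := by
    intro f h; simp [Set.mem_iUnion]
  refine ⟨?_, ?_, ?_⟩
  · intro f
    obtain ⟨g, hg⟩ := hD1₁ f
    obtain ⟨h, hh⟩ := hD1₂ g
    exact ⟨h, (memU f h).2 ⟨g, hh, hg⟩⟩
  · intro f f' hff
    rcases hD2₁ f f' hff with ⟨g, hf, hf'⟩ | ⟨g, g', hgg, hf, hf'⟩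
    · obtain ⟨h, hh⟩ := hD1₂ g
      exact Or.inl ⟨h, (memU f h).2 ⟨g, hh, hf⟩, (memU f' h).2 ⟨g, hh, hf'⟩⟩
    · rcases hD2₂ g g' hgg with ⟨h, hg1, hg2⟩ | ⟨h, h', hhh, hg1, hg2⟩
      · exact Or.inl ⟨h, (memU f h).2 ⟨g, hg1, hf⟩, (memU f' h).2 ⟨g', hg2, hf'⟩⟩
      · exact Or.inr ⟨h, h', hhh, (memU f h).2 ⟨g, hg1, hf⟩, (memU f' h').2 ⟨g', hg2, hf'⟩⟩
  · intro f
    set S : Set γ := {h : γ | f ∈ ⋃ g ∈ B2 h, B1 g} with hS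
    have hmemS : ∀ {g h}, g ∈ B2 h → f ∈ B1 g → h ∈ S := by
      intro g h h1 h2; exact (memU f h).2 ⟨g, h1, h2⟩
    -- sub-lemma A: within the bag set of a single g ∈ Gf
    have lemA : ∀ (g : β) (hg : f ∈ B1 g) (h h' : γ) (h1 : g ∈ B2 h) (h2 : g ∈ B2 h'),
        (H.induce S).Reachable ⟨h, hmemS h1 hg⟩ ⟨h', hmemS h2 hg⟩ := by
      intro g hg h h' h1 h2
      have hsub : {h : γ | g ∈ B2 h} ⊆ S := fun x hx => hmemS hx hg
      have := ((hD3₂ g).preconnected ⟨h, h1⟩ ⟨h', h2⟩).map (induceHomOfLE H hsub)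
      exact this
    -- main claim via walk induction in G.induce Gf
    have key : ∀ (x y : {g : β | f ∈ B1 g}) (p : (G.induce {g : β | f ∈ B1 g}).Walk x y)
        (h h' : γ) (h1 : x.1 ∈ B2 h) (h2 : y.1 ∈ B2 h'),
        (H.induce S).Reachable ⟨h, hmemS h1 x.2⟩ ⟨h', hmemS h2 y.2⟩ := by
      intro x y p
      induction p with
      | @nil u => intro h h' h1 h2; exact lemA _ u.2 h h' h1 h2
      | @cons u v w hadj p ih =>
        intro h h' h1 h2
        have hGadj : G.Adj u.1 v.1 := hadj
        rcases hD2₂ u.1 v.1 hGadj with ⟨h₀, hu0, hv0⟩ | ⟨h₁, h₂, hhh, hu1, hv2⟩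
        · exact (lemA _ u.2 h h₀ h1 hu0).trans (ih h₀ h' hv0 h2)
        · have e : (H.induce S).Adj ⟨h₁, hmemS hu1 u.2⟩ ⟨h₂, hmemS hv2 v.2⟩ := hhh
          exact ((lemA _ u.2 h h₁ h1 hu1).trans e.reachable).trans (ih h₂ h' hv2 h2)
    obtain ⟨g₀, hg₀⟩ := hD1₁ f
    obtain ⟨h₀, hh₀⟩ := hD1₂ g₀
    haveI : Nonempty S := ⟨⟨h₀, hmemS hh₀ hg₀⟩⟩
    refine SimpleGraph.Connected.mk fun a b => ?_
    -- a b : ↑S ; find witnesses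
    obtain ⟨ga, hga, hfa⟩ := (memU f a.1).1 a.2
    obtain ⟨gb, hgb, hfb⟩ := (memU f b.1).1 b.2
    have hreach := ((hD3₁ f).preconnected ⟨ga, hfa⟩ ⟨gb, hfb⟩)
    obtain ⟨p⟩ := hreach
    have := key ⟨ga, hfa⟩ ⟨gb, hfb⟩ p a.1 b.1 hga hgb
    exact this
end

section
/- Let G and H be simple graphs and let (B_h)_{h∈V(H)} be a family of subsets of V(G) satisfying conditions (D1), (D2), and (D3) for G over H. Let A be a nonempty subset of V(G) such that the subgraph of G induced by A is connected. Then the set {h ∈ V(H) : g ∈ B_h for some g ∈ A} induces a connected subgraph of H. -/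
/-- A graph hom from an induced subgraph on a smaller set to one on a bigger set. -/
def induceLift {γ : Type*} (H : SimpleGraph γ) {T S : Set γ} (hTS : T ⊆ S) :
    H.induce T →g H.induce S :=
  ⟨fun v => ⟨v.1, hTS v.2⟩, fun {_ _} h => h⟩

/-- If `(B_h)` satisfies (D1), (D2), (D3) for `G` over `H` and
`A ⊆ V(G)` is nonempty with `G[A]` connected, then
`{h : ∃ g ∈ A, g ∈ B_h}` induces a connected subgraph of `H`. -/
theorem connected_set_bags_connected
    {β γ : Type*} (G : SimpleGraph β) (H : SimpleGraph γ) (B : γ → Set β)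
    (hD1 : ∀ g : β, ∃ h : γ, g ∈ B h)
    (hD2 : ∀ g g' : β, G.Adj g g' →
      (∃ h : γ, g ∈ B h ∧ g' ∈ B h) ∨
      (∃ h h' : γ, H.Adj h h' ∧ g ∈ B h ∧ g' ∈ B h'))
    (hD3 : ∀ g : β, (H.induce {h : γ | g ∈ B h}).Connected)
    (A : Set β) (hA : A.Nonempty) (hAconn : (G.induce A).Connected) :
    (H.induce {h : γ | ∃ g ∈ A, g ∈ B h}).Connected := by
  set S : Set γ := {h : γ | ∃ g ∈ A, g ∈ B h} with hS
  -- key claim: bags of a single g ∈ A are connected inside S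
  have key : ∀ (g : β) (hgA : g ∈ A) (h h' : γ) (hg : g ∈ B h) (hg' : g ∈ B h'),
      (H.induce S).Reachable ⟨h, ⟨g, hgA, hg⟩⟩ ⟨h', ⟨g, hgA, hg'⟩⟩ := by
    intro g hgA h h' hg hg'
    have hsub : {x : γ | g ∈ B x} ⊆ S := fun x hx => ⟨g, hgA, hx⟩
    have hr : (H.induce {x : γ | g ∈ B x}).Reachable ⟨h, hg⟩ ⟨h', hg'⟩ :=
      (hD3 g).preconnected _ _
    exact hr.map (induceLift H hsub)
  rw [SimpleGraph.connected_iff]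
  refine ⟨?_, ?_⟩
  · rintro ⟨h₁, g₁, hg₁A, hg₁⟩ ⟨h₂, g₂, hg₂A, hg₂⟩
    -- main induction along a walk in G.induce A
    have main : ∀ (a b : A) (_ : (G.induce A).Walk a b) (h h' : γ)
        (ha : a.1 ∈ B h) (hb : b.1 ∈ B h'),
        (H.induce S).Reachable ⟨h, ⟨a.1, a.2, ha⟩⟩ ⟨h', ⟨b.1, b.2, hb⟩⟩ := by
      intro a b w
      induction w with
      | nil =>
        rename_i u
        intro h h' ha hb
        exact key u.1 u.2 h h' ha hb
      | cons hadj w ih =>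
        rename_i u v _
        intro h h' ha hb
        have hGadj : G.Adj u.1 v.1 := hadj
        rcases hD2 _ _ hGadj with ⟨h₀, hu, hv⟩ | ⟨h₀, h₀', hHadj, hu, hv⟩
        · exact (key _ u.2 h h₀ ha hu).trans
            ((key _ v.2 h₀ h₀ hv hv).symm.trans (ih h₀ h' hv hb))
        · have hstep : (H.induce S).Adj ⟨h₀, ⟨u.1, u.2, hu⟩⟩ ⟨h₀', ⟨v.1, v.2, hv⟩⟩ := hHadj
          exact (key _ u.2 h h₀ ha hu).trans (hstep.reachable.trans (ih h₀' h' hv hb))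
    obtain ⟨w⟩ := hAconn.preconnected ⟨g₁, hg₁A⟩ ⟨g₂, hg₂A⟩
    exact main _ _ w h₁ h₂ hg₁ hg₂
  · obtain ⟨g, hg⟩ := hA
    obtain ⟨h, hgh⟩ := hD1 g
    exact ⟨⟨h, g, hg, hgh⟩⟩
end
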